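/- arXiv:2209.12876 — 8 statements merged into one kernel-verified Lean document; each statement's English description precedes it below -/
import Mathlib

section
/- The real number log|g'(α)| / log|h'(β)| is irrational, where g'(α) = 1/(43+2√462)² and h'(β) = 1/(987+2√243542)². -/
open Real

private lemma zsq_pow_coords {d : ℤ} (z : ℤ√d) (hd : 1 ≤ d) (hre : 1 ≤ z.re) (him : 1 ≤ z.im) :
    ∀ n : ℕ, 1 ≤ (z ^ (n + 1)).re ∧ 1 ≤ (z ^ (n + 1)).im := by
  intro n
  induction n with
  | zero => simpa using ⟨hre, him⟩
  | succ k ih =>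
    obtain ⟨ha, hb⟩ := ih
    have h0a : 0 ≤ (z ^ (k + 1)).re := by linarith
    have h0b : 0 ≤ (z ^ (k + 1)).im := by linarith
    have hd0 : (0:ℤ) ≤ d := by linarith
    have hre0 : 0 ≤ z.re := by linarith
    have him0 : 0 ≤ z.im := by linarith
    rw [pow_succ]
    constructor <;> simp only [Zsqrtd.re_mul, Zsqrtd.im_mul] <;>
      nlinarith [mul_le_mul ha hre zero_le_one h0a, mul_le_mul hb him zero_le_one h0b,
        mul_le_mul hb hre zero_le_one h0b,
        mul_nonneg (mul_nonneg hd0 h0b) him0, mul_nonneg h0a him0, mul_nonneg h0b hre0]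

private lemma key_ne : ¬ IsSquare (112516404 : ℤ) := by
  rintro ⟨r, hr⟩
  have hr' : r.natAbs * r.natAbs = 112516404 := by
    have := congrArg Int.natAbs hr
    simpa [Int.natAbs_mul] using this.symm
  rcases le_or_gt r.natAbs 10607 with h | h
  · have := Nat.mul_le_mul h h; omega
  · have h' : 10608 ≤ r.natAbs := h
    have := Nat.mul_le_mul h' h'; omega

private lemma sqrt_prod_irr : Irrational (Real.sqrt 462 * Real.sqrt 243542) := by
  have h : Real.sqrt 462 * Real.sqrt 243542 = Real.sqrt ((112516404 : ℤ)) := by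
    rw [← Real.sqrt_mul (by norm_num : (0:ℝ) ≤ 462)]
    norm_num
  rw [h, irrational_sqrt_intCast_iff_of_nonneg (by norm_num)]
  exact key_ne

/-- `log|g'(α)| / log|h'(β)|` is irrational, where `g'(α) = 1/(43+2√462)²` and
`h'(β) = 1/(987+2√243542)²`. -/
theorem stmt_3 :
    Irrational (Real.log |1 / (43 + 2 * Real.sqrt 462) ^ 2| /
      Real.log |1 / (987 + 2 * Real.sqrt 243542) ^ 2|) := by
  set s : ℝ := Real.sqrt 462 with hs
  set t : ℝ := Real.sqrt 243542 with ht
  have hs0 : 0 ≤ s := Real.sqrt_nonneg _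
  have ht0 : 0 ≤ t := Real.sqrt_nonneg _
  have hA1 : (1:ℝ) < 43 + 2 * s := by nlinarith
  have hB1 : (1:ℝ) < 987 + 2 * t := by nlinarith
  have hA0 : (0:ℝ) < 43 + 2 * s := by linarith
  have hB0 : (0:ℝ) < 987 + 2 * t := by linarith
  -- rewrite the logs
  have e1 : Real.log |1 / (43 + 2 * s) ^ 2| = -(2 * Real.log (43 + 2 * s)) := by
    rw [abs_of_pos (by positivity), one_div, Real.log_inv, Real.log_pow]
    push_cast; ring
  have e2 : Real.log |1 / (987 + 2 * t) ^ 2| = -(2 * Real.log (987 + 2 * t)) := by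
    rw [abs_of_pos (by positivity), one_div, Real.log_inv, Real.log_pow]
    push_cast; ring
  rw [e1, e2]
  have hlogA : 0 < Real.log (43 + 2 * s) := Real.log_pos hA1
  have hlogB : 0 < Real.log (987 + 2 * t) := Real.log_pos hB1
  have hratio : -(2 * Real.log (43 + 2 * s)) / -(2 * Real.log (987 + 2 * t))
      = Real.log (43 + 2 * s) / Real.log (987 + 2 * t) := by
    field_simp
  rw [hratio]
  rintro ⟨r, hr⟩
  have hrpos : 0 < r := by
    have : (0:ℝ) < (r:ℝ) := by rw [hr]; positivity
    exact_mod_cast this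
  -- q * log A = p * log B
  set q : ℕ := r.den with hq
  set p : ℕ := r.num.toNat with hp
  have hq1 : 1 ≤ q := r.pos
  have hp1 : 1 ≤ p := by
    have := Rat.num_pos.mpr hrpos
    omega
  have hpr : (p : ℝ) = (r.num : ℝ) := by
    have : (0:ℤ) ≤ r.num := le_of_lt (Rat.num_pos.mpr hrpos)
    exact_mod_cast congrArg (Int.cast : ℤ → ℝ) (Int.toNat_of_nonneg this)
  have hkey : (q : ℝ) * Real.log (43 + 2 * s) = (p : ℝ) * Real.log (987 + 2 * t) := by
    have h1 : (r:ℝ) * Real.log (987 + 2 * t) = Real.log (43 + 2 * s) := by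
      rw [hr]; field_simp
    have h2 : (r:ℝ) = (r.num : ℝ) / (q : ℝ) := by exact_mod_cast (Rat.num_div_den r).symm
    rw [hpr]
    have hqne : (q:ℝ) ≠ 0 := by positivity
    field_simp [h2] at h1 ⊢
    rw [h2, div_mul_eq_mul_div, div_eq_iff hqne] at h1
    linarith [h1]
  have hpow : (43 + 2 * s) ^ q = (987 + 2 * t) ^ p := by
    have hl : Real.log ((43 + 2 * s) ^ q) = Real.log ((987 + 2 * t) ^ p) := by
      rw [Real.log_pow, Real.log_pow]; exact hkey
    exact Real.log_injOn_pos (Set.mem_Ioi.mpr (by positivity))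
      (Set.mem_Ioi.mpr (by positivity)) hl
  -- Zsqrtd representation
  have h462 : (0:ℤ) ≤ 462 := by norm_num
  have h243542 : (0:ℤ) ≤ 243542 := by norm_num
  set za : ℤ√(462:ℤ) := ⟨43, 2⟩ with hza
  set zb : ℤ√(243542:ℤ) := ⟨987, 2⟩ with hzb
  have hta : Zsqrtd.toReal h462 za = 43 + 2 * s := by
    simp [hza, Zsqrtd.toReal_apply, hs]
  have htb : Zsqrtd.toReal h243542 zb = 987 + 2 * t := by
    simp [hzb, Zsqrtd.toReal_apply, ht]
  obtain ⟨n, hn⟩ : ∃ n, q = n + 1 := ⟨q - 1, by omega⟩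
  obtain ⟨m, hm⟩ : ∃ m, p = m + 1 := ⟨p - 1, by omega⟩
  obtain ⟨hx1, hy1⟩ := zsq_pow_coords za (by norm_num) (by norm_num [hza]) (by norm_num [hza]) n
  obtain ⟨hu1, hv1⟩ := zsq_pow_coords zb (by norm_num) (by norm_num [hzb]) (by norm_num [hzb]) m
  set x : ℤ := (za ^ (n+1)).re
  set y : ℤ := (za ^ (n+1)).im
  set u : ℤ := (zb ^ (m+1)).re
  set v : ℤ := (zb ^ (m+1)).im
  have hreal : (x:ℝ) + (y:ℝ) * s = (u:ℝ) + (v:ℝ) * t := by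
    have ha : (x:ℝ) + (y:ℝ) * s = (43 + 2 * s) ^ q := by
      rw [hn, ← hta, ← map_pow, Zsqrtd.toReal_apply]
      push_cast; ring
    have hb : (u:ℝ) + (v:ℝ) * t = (987 + 2 * t) ^ p := by
      rw [hm, ← htb, ← map_pow, Zsqrtd.toReal_apply]
      push_cast; ring
    rw [ha, hb, hpow]
  -- derive rationality of s * t
  have hs2 : s * s = 462 := Real.mul_self_sqrt (by norm_num)
  have ht2 : t * t = 243542 := Real.mul_self_sqrt (by norm_num)
  have hyv : (y:ℝ) * s - (v:ℝ) * t = (u:ℝ) - (x:ℝ) := by linarith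
  have hsq : 2 * (y:ℝ) * (v:ℝ) * (s * t)
      = (y:ℝ)^2 * 462 + (v:ℝ)^2 * 243542 - ((u:ℝ) - (x:ℝ))^2 := by
    have h2 : ((y:ℝ) * s - (v:ℝ) * t)^2 = ((u:ℝ) - (x:ℝ))^2 := by rw [hyv]
    have h3 : ((y:ℝ) * s - (v:ℝ) * t)^2
        = (y:ℝ)^2 * (s*s) + (v:ℝ)^2 * (t*t) - 2*(y:ℝ)*(v:ℝ)*(s*t) := by ring
    rw [h3, hs2, ht2] at h2
    linarith
  have hyR : (0:ℝ) < (y:ℝ) := by exact_mod_cast lt_of_lt_of_le zero_lt_one hy1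
  have hvR : (0:ℝ) < (v:ℝ) := by exact_mod_cast lt_of_lt_of_le zero_lt_one hv1
  have hst : s * t = ((((y^2 * 462 + v^2 * 243542 - (u - x)^2 : ℤ) : ℚ) / ((2 * y * v : ℤ) : ℚ) : ℚ) : ℝ) := by
    push_cast
    rw [eq_div_iff (by positivity)]
    linear_combination hsq
  exact sqrt_prod_irr ⟨_, hst.symm⟩
end

section
/- Let f(x) = (p_{k-1}x + p_k)/(q_{k-1}x + q_k) be the inverse branch of the Gauss map associated to a finite continued fraction word (a_1,…,a_k) with all a_i ∈ {1,2,3,4}, where p_j/q_j = [0;a_1,…,a_j] are the convergents. Then for any x, y with (√2−1)/2 ≤ x, y ≤ 2√2−2, one has 1/2.3 < |f'(x)|/|f'(y)| < 2.3. -/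
/-- Continued fraction numerators: `(cfP a n).1 = pₙ`, `(cfP a n).2 = pₙ₋₁`,
with `p₋₁ = 1`, `p₀ = a₀`, `pₙ₊₁ = aₙ₊₁ pₙ + pₙ₋₁`. -/
noncomputable def cfP (a : ℕ → ℝ) : ℕ → ℝ × ℝ
  | 0 => (a 0, 1)
  | n + 1 => (a (n + 1) * (cfP a n).1 + (cfP a n).2, (cfP a n).1)

/-- Continued fraction denominators: `(cfQ a n).1 = qₙ`, `(cfQ a n).2 = qₙ₋₁`,
with `q₋₁ = 0`, `q₀ = 1`, `qₙ₊₁ = aₙ₊₁ qₙ + qₙ₋₁`. -/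
noncomputable def cfQ (a : ℕ → ℝ) : ℕ → ℝ × ℝ
  | 0 => (1, 0)
  | n + 1 => (a (n + 1) * (cfQ a n).1 + (cfQ a n).2, (cfQ a n).1)

/-- The `n`-th convergent `[a₀; a₁, …, aₙ] = pₙ/qₙ` of the continued fraction with
partial quotients `a`. -/
noncomputable def cfConv (a : ℕ → ℝ) (n : ℕ) : ℝ := (cfP a n).1 / (cfQ a n).1

/-- `x` is the value of the infinite continued fraction `[a₀; a₁, a₂, …]`, i.e. the limit
of its convergents. -/
def IsCFVal (a : ℕ → ℝ) (x : ℝ) : Prop :=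
  Filter.Tendsto (cfConv a) Filter.atTop (nhds x)

lemma cf_det (b : ℕ → ℝ) : ∀ n, (cfP b n).2 * (cfQ b n).1 - (cfP b n).1 * (cfQ b n).2 = (-1)^n := by
  intro n
  induction n with
  | zero => simp [cfP, cfQ]
  | succ n ih =>
    simp only [cfP, cfQ, pow_succ]
    linear_combination (-1 : ℝ) * ih

lemma cfQ_bounds (b : ℕ → ℝ) : ∀ n, (∀ j, 1 ≤ j → j ≤ n → 1 ≤ b j) →
    0 ≤ (cfQ b n).2 ∧ (cfQ b n).2 ≤ (cfQ b n).1 ∧ 1 ≤ (cfQ b n).1 := by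
  intro n
  induction n with
  | zero => intro _; simp [cfQ]
  | succ n ih =>
    intro h
    obtain ⟨h1, h2, h3⟩ := ih (fun j hj1 hj2 => h j hj1 (hj2.trans (Nat.le_succ n)))
    have hb := h (n+1) (Nat.succ_le_succ (Nat.zero_le n)) le_rfl
    simp only [cfQ]
    refine ⟨by linarith, by nlinarith, by nlinarith⟩

lemma cfQ_bounds' (b : ℕ → ℝ) (k : ℕ) (hk : 1 ≤ k) (h : ∀ j, 1 ≤ j → j ≤ k → 1 ≤ b j) :
    1 ≤ (cfQ b k).2 ∧ (cfQ b k).2 ≤ (cfQ b k).1 := by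
  obtain ⟨m, rfl⟩ : ∃ m, k = m + 1 := ⟨k - 1, by omega⟩
  obtain ⟨h1, h2, h3⟩ := cfQ_bounds b m (fun j hj1 hj2 => h j hj1 (by omega))
  have hb := h (m+1) (by omega) le_rfl
  simp only [cfQ]
  exact ⟨h3, by nlinarith⟩

lemma deriv_mobius (A B C D z : ℝ) (hz : C * z + D ≠ 0) :
    deriv (fun w => (A*w+B)/(C*w+D)) z = (A*D - B*C)/(C*z+D)^2 := by
  have h1 : HasDerivAt (fun w => A*w+B) A z := by
    simpa using ((hasDerivAt_id z).const_mul A).add_const B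
  have h2 : HasDerivAt (fun w => C*w+D) C z := by
    simpa using ((hasDerivAt_id z).const_mul C).add_const D
  have h3 := (h1.div h2 hz).deriv
  rw [show (fun w => (A*w+B)/(C*w+D)) = ((fun w => A*w+B) / fun w => C*w+D) from rfl, h3]
  congr 1
  ring

lemma core_ineq (S C D : ℝ) (hS1 : 1.4142 < S) (hS2 : S < 1.4143)
    (hC : 1 ≤ C) (hCD : C ≤ D) :
    (C * (2*S - 2) + D)^2 < 2.3 * (C * ((S-1)/2) + D)^2 := by
  have h0 : (0:ℝ) ≤ C := by linarith
  nlinarith [mul_nonneg (sub_nonneg.2 hCD) h0, sq_nonneg (D - C),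
    mul_nonneg (mul_nonneg (sub_nonneg.2 hCD) h0) (by linarith : (0:ℝ) ≤ 1.4143 - S),
    mul_nonneg (mul_nonneg (by linarith : (0:ℝ) ≤ S - 1.4142) h0) h0,
    sq_nonneg C, mul_nonneg (sq_nonneg (D-C)) (by linarith : (0:ℝ) ≤ S - 1.4142)]

lemma vpos (S C D z : ℝ) (hS : 1 < S) (hC : 1 ≤ C) (hCD : C ≤ D)
    (hz : (S - 1)/2 ≤ z) : 0 < C * z + D := by nlinarith

lemma ratio_bound (S C D x y : ℝ) (hS2 : S * S = 2) (hS0 : 0 ≤ S)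
    (hC1 : 1 ≤ C) (hCD : C ≤ D)
    (hx1 : (S - 1)/2 ≤ x) (hx2 : x ≤ 2*S - 2)
    (hy1 : (S - 1)/2 ≤ y) (hy2 : y ≤ 2*S - 2) :
    1/2.3 < (C*y+D)^2/(C*x+D)^2 ∧ (C*y+D)^2/(C*x+D)^2 < 2.3 := by
  have hSl : 1.4142 < S := by nlinarith
  have hSu : S < 1.4143 := by nlinarith
  have hvx : 0 < C * x + D := vpos S C D x (by linarith) hC1 hCD hx1
  have hvy : 0 < C * y + D := vpos S C D y (by linarith) hC1 hCD hy1
  have key : ∀ u v : ℝ, (S - 1)/2 ≤ u → (S - 1)/2 ≤ v → v ≤ 2*S - 2 →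
      (C * v + D)^2 < 2.3 * (C * u + D)^2 := by
    intro u v hu hv0 hv
    have h1 : C * v + D ≤ C * (2*S - 2) + D := by nlinarith
    have h2 : C * ((S-1)/2) + D ≤ C * u + D := by nlinarith
    have h30 : 0 ≤ C * ((S-1)/2) + D := by nlinarith
    have h3 : 0 ≤ C * v + D := by nlinarith
    have h4 : (C * v + D)^2 ≤ (C * (2*S-2) + D)^2 := by
      apply pow_le_pow_left₀ h3 h1
    have h5 : (C * ((S-1)/2) + D)^2 ≤ (C * u + D)^2 := by
      apply pow_le_pow_left₀ h30 h2
    have h6 := core_ineq S C D hSl hSu hC1 hCD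
    linarith
  constructor
  · have h := key y x hy1 hx1 hx2
    rw [div_lt_div_iff₀ (by norm_num) (pow_pos hvx 2)]
    linarith
  · have h := key x y hx1 hy1 hy2
    rw [div_lt_iff₀ (pow_pos hvx 2)]
    linarith

/-- Bounded distortion for inverse branches of the Gauss map: if
`f(x) = (pₖ₋₁ x + pₖ)/(qₖ₋₁ x + qₖ)` is the inverse branch associated to a word
`(a₁, …, aₖ)` with all letters in `{1,2,3,4}` (where `pⱼ/qⱼ = [0; a₁, …, aⱼ]` are
the convergents), then `1/2.3 < |f'(x)|/|f'(y)| < 2.3` for all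
`(√2−1)/2 ≤ x, y ≤ 2√2−2`. -/
theorem stmt_5 (k : ℕ) (hk : 1 ≤ k) (a : ℕ → ℕ)
    (ha : ∀ j, 1 ≤ j → j ≤ k → 1 ≤ a j ∧ a j ≤ 4)
    (b : ℕ → ℝ) (hb : b = fun j => if j = 0 then 0 else (a j : ℝ))
    (f : ℝ → ℝ)
    (hf : f = fun z => ((cfP b k).2 * z + (cfP b k).1) / ((cfQ b k).2 * z + (cfQ b k).1))
    (x y : ℝ)
    (hx1 : (Real.sqrt 2 - 1) / 2 ≤ x) (hx2 : x ≤ 2 * Real.sqrt 2 - 2)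
    (hy1 : (Real.sqrt 2 - 1) / 2 ≤ y) (hy2 : y ≤ 2 * Real.sqrt 2 - 2) :
    1 / 2.3 < |deriv f x| / |deriv f y| ∧ |deriv f x| / |deriv f y| < 2.3 := by
  have hS2 : Real.sqrt 2 * Real.sqrt 2 = 2 := Real.mul_self_sqrt (by norm_num)
  have hS0 : 0 ≤ Real.sqrt 2 := Real.sqrt_nonneg 2
  have hS1 : (1:ℝ) < Real.sqrt 2 := by nlinarith
  have hbj : ∀ j, 1 ≤ j → j ≤ k → 1 ≤ b j := by
    intro j hj1 hj2
    rw [hb]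
    simp only [if_neg (by omega : j ≠ 0)]
    exact_mod_cast (ha j hj1 hj2).1
  obtain ⟨hC1, hCD⟩ := cfQ_bounds' b k hk hbj
  have hvx : 0 < (cfQ b k).2 * x + (cfQ b k).1 :=
    vpos (Real.sqrt 2) _ _ x hS1 hC1 hCD hx1
  have hvy : 0 < (cfQ b k).2 * y + (cfQ b k).1 :=
    vpos (Real.sqrt 2) _ _ y hS1 hC1 hCD hy1
  have hdet := cf_det b k
  have habs : ∀ z : ℝ, 0 < (cfQ b k).2 * z + (cfQ b k).1 →
      |deriv f z| = 1 / ((cfQ b k).2 * z + (cfQ b k).1)^2 := by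
    intro z hz
    rw [hf, deriv_mobius _ _ _ _ z hz.ne', hdet, abs_div, abs_pow, abs_neg, abs_one,
      one_pow, abs_of_pos (pow_pos hz 2)]
  have hrw : |deriv f x| / |deriv f y| =
      ((cfQ b k).2 * y + (cfQ b k).1)^2 / ((cfQ b k).2 * x + (cfQ b k).1)^2 := by
    rw [habs x hvx, habs y hvy]
    field_simp
  rw [hrw]
  exact ratio_bound (Real.sqrt 2) _ _ x y hS2 hS0 hC1 hCD hx1 hx2 hy1 hy2
end

section
/- Let α = [0; \overline{3,1,3,1,2,1}] = (2√462−29)/53, let α₁ = [0; 3,1,3,1,2,1,\overline{3,4}], and let α₂ = [0; 3,1,3,1,2,1,2,\overline{1,3}]. Then (α₁ − α)/(α₂ − α₁) < 1. -/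
lemma cfVal_of_tail (a s : ℕ → ℝ) (ha : ∀ n, 1 ≤ a (n+1)) (hs : ∀ n, 1 ≤ s (n+1))
    (hrec : ∀ n, s n = a n + 1 / s (n+1)) : IsCFVal a (s 0) := by
  have hspos : ∀ n, (0:ℝ) < s (n+1) := fun n => lt_of_lt_of_le one_pos (hs n)
  have hmul : ∀ n, s (n+1) * s (n+2) = a (n+1) * s (n+2) + 1 := by
    intro n
    have h2 : s (n+2) ≠ 0 := (hspos (n+1)).ne'
    rw [hrec (n+1)]
    field_simp
  have hND : ∀ n, (cfP a n).1 * s (n+1) + (cfP a n).2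
      = s 0 * ((cfQ a n).1 * s (n+1) + (cfQ a n).2) := by
    intro n
    induction n with
    | zero =>
      have h1 : s 1 ≠ 0 := (hspos 0).ne'
      simp only [cfP, cfQ]
      rw [hrec 0]
      field_simp
      ring
    | succ n ih =>
      simp only [cfP, cfQ]
      linear_combination s (n+2) * ih - ((cfP a n).1 - s 0 * (cfQ a n).1) * hmul n
  have hdet : ∀ n, (cfP a n).1 * (cfQ a n).2 - (cfP a n).2 * (cfQ a n).1 = (-1 : ℝ)^(n+1) := by
    intro n
    induction n with
    | zero => simp [cfP, cfQ]
    | succ n ih =>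
      simp only [cfP, cfQ, pow_succ]
      linear_combination (-1 : ℝ) * ih
  have hQ : ∀ n : ℕ, (((n:ℝ) ≤ (cfQ a n).1 ∧ 1 ≤ (cfQ a n).1) ∧
      ((n:ℝ)+1 ≤ (cfQ a n).1 + (cfQ a n).2 ∧ 0 ≤ (cfQ a n).2)) := by
    intro n
    induction n with
    | zero => simp [cfQ]
    | succ n ih =>
      obtain ⟨⟨h1, h2⟩, h3, h4⟩ := ih
      have key : (cfQ a n).1 ≤ a (n+1) * (cfQ a n).1 :=
        le_mul_of_one_le_left (by linarith) (ha n)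
      simp only [cfQ]
      push_cast
      refine ⟨⟨by linarith, by linarith⟩, by linarith, by linarith⟩
  have hbound : ∀ n : ℕ, 1 ≤ n → |cfConv a n - s 0| ≤ 1 / n := by
    intro n hn
    obtain ⟨⟨h1, h2⟩, h3, h4⟩ := hQ n
    have hdn := hdet n
    have hNn := hND n
    have hsn := hs n
    have hn1 : (1:ℝ) ≤ (n:ℝ) := by exact_mod_cast hn
    have hq0 : (0:ℝ) < (cfQ a n).1 := by linarith
    have hD : (n:ℝ) ≤ (cfQ a n).1 * s (n+1) + (cfQ a n).2 := by
      nlinarith [mul_le_mul_of_nonneg_left hsn (le_of_lt hq0)]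
    have hD0 : (0:ℝ) < (cfQ a n).1 * s (n+1) + (cfQ a n).2 := by linarith
    have hs0 : s 0 = ((cfP a n).1 * s (n+1) + (cfP a n).2)
        / ((cfQ a n).1 * s (n+1) + (cfQ a n).2) := by
      rw [eq_div_iff hD0.ne']
      linear_combination -hNn
    have heq : cfConv a n - s 0 = ((cfP a n).1 * (cfQ a n).2 - (cfP a n).2 * (cfQ a n).1)
        / ((cfQ a n).1 * ((cfQ a n).1 * s (n+1) + (cfQ a n).2)) := by
      rw [hs0, cfConv, div_sub_div _ _ hq0.ne' hD0.ne']
      congr 1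
      ring
    rw [heq, hdn, abs_div]
    have habs : |(-1 : ℝ)^(n+1)| = 1 := by
      rw [abs_pow, abs_neg, abs_one, one_pow]
    rw [habs]
    rw [abs_of_pos (by positivity)]
    rw [div_le_div_iff₀ (by positivity) (by positivity)]
    nlinarith
  have h0 : Filter.Tendsto (fun n => cfConv a n - s 0) Filter.atTop (nhds 0) := by
    refine squeeze_zero_norm' ?_ tendsto_one_div_atTop_nhds_zero_nat
    filter_upwards [Filter.eventually_ge_atTop 1] with n hn
    simpa using hbound n hn
  have := h0.add_const (s 0)
  simpa [IsCFVal] using this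

section
open Real

lemma sqrt3_lb : (1.7320508 : ℝ) < Real.sqrt 3 := by
  have h := Real.sq_sqrt (show (0:ℝ) ≤ 3 by norm_num)
  have h0 := Real.sqrt_nonneg 3
  nlinarith

lemma sqrt3_ub : Real.sqrt 3 < 1.7320509 := by
  have h := Real.sq_sqrt (show (0:ℝ) ≤ 3 by norm_num)
  have h0 := Real.sqrt_nonneg 3
  nlinarith

lemma sqrt21_lb : (4.58257569 : ℝ) < Real.sqrt 21 := by
  have h := Real.sq_sqrt (show (0:ℝ) ≤ 21 by norm_num)
  have h0 := Real.sqrt_nonneg 21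
  nlinarith

lemma sqrt21_ub : Real.sqrt 21 < 4.58257570 := by
  have h := Real.sq_sqrt (show (0:ℝ) ≤ 21 by norm_num)
  have h0 := Real.sqrt_nonneg 21
  nlinarith

lemma sqrt462_lb : (21.49418526 : ℝ) < Real.sqrt 462 := by
  have h := Real.sq_sqrt (show (0:ℝ) ≤ 462 by norm_num)
  have h0 := Real.sqrt_nonneg 462
  nlinarith

lemma sqrt462_ub : Real.sqrt 462 < 21.49418527 := by
  have h := Real.sq_sqrt (show (0:ℝ) ≤ 462 by norm_num)
  have h0 := Real.sqrt_nonneg 462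
  nlinarith

lemma cf_step (aa u v : ℝ) (hv : v ≠ 0) (h : (u - aa) * v = 1) : u = aa + 1 / v := by
  field_simp
  linear_combination h

noncomputable def sfun1 : ℕ → ℝ := fun n =>
  if n = 0 then (10954 - 4*Real.sqrt 3)/41476
  else if n = 1 then (10954 + 4*Real.sqrt 3)/2893
  else if n = 2 then (2275 - 4*Real.sqrt 3)/1789
  else if n = 3 then (243 + 2*Real.sqrt 3)/66
  else if n = 4 then (90 - 4*Real.sqrt 3)/61
  else if n = 5 then (29 + 4*Real.sqrt 3)/13
  else if n = 6 then (4*Real.sqrt 3 - 3)/3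
  else if (n - 7) % 2 = 0 then (3 + 2*Real.sqrt 3)/2
  else (6 + 4*Real.sqrt 3)/3

noncomputable def sfun2 : ℕ → ℝ := fun n =>
  if n = 0 then (10181 + Real.sqrt 21)/38590
  else if n = 1 then (10181 - Real.sqrt 21)/2686
  else if n = 2 then (2123 + Real.sqrt 21)/1678
  else if n = 3 then (445 - Real.sqrt 21)/118
  else if n = 4 then (91 + Real.sqrt 21)/70
  else if n = 5 then (21 - Real.sqrt 21)/6
  else if n = 6 then (9 + Real.sqrt 21)/10
  else if n = 7 then (1 + Real.sqrt 21)/2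
  else if (n - 8) % 2 = 0 then (3 + Real.sqrt 21)/6
  else (3 + Real.sqrt 21)/2

end

section
noncomputable def aseq1 : ℕ → ℝ := fun n => if n = 0 then 0 else if n ≤ 6 then
      ([3, 1, 3, 1, 2, 1].getD (n - 1) 0 : ℝ)
      else if (n - 7) % 2 = 0 then 3 else 4

noncomputable def aseq2 : ℕ → ℝ := fun n => if n = 0 then 0 else if n ≤ 7 then
      ([3, 1, 3, 1, 2, 1, 2].getD (n - 1) 0 : ℝ)
      else if (n - 8) % 2 = 0 then 1 else 3

lemma sfun1_tail (m : ℕ) : sfun1 (m+7) =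
    if m % 2 = 0 then (3 + 2*Real.sqrt 3)/2 else (6 + 4*Real.sqrt 3)/3 := by
  simp only [sfun1]
  rw [if_neg (by omega), if_neg (by omega), if_neg (by omega), if_neg (by omega),
    if_neg (by omega), if_neg (by omega), if_neg (by omega)]
  norm_num

lemma sfun2_tail (m : ℕ) : sfun2 (m+8) =
    if m % 2 = 0 then (3 + Real.sqrt 21)/6 else (3 + Real.sqrt 21)/2 := by
  simp only [sfun2]
  rw [if_neg (by omega), if_neg (by omega), if_neg (by omega), if_neg (by omega),
    if_neg (by omega), if_neg (by omega), if_neg (by omega), if_neg (by omega)]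
  norm_num

lemma aseq1_tail (m : ℕ) : aseq1 (m+7) = if m % 2 = 0 then 3 else 4 := by
  simp only [aseq1]
  rw [if_neg (by omega), if_neg (by omega)]
  norm_num

lemma aseq2_tail (m : ℕ) : aseq2 (m+8) = if m % 2 = 0 then 1 else 3 := by
  simp only [aseq2]
  rw [if_neg (by omega), if_neg (by omega)]
  norm_num

lemma ha1 : ∀ n, 1 ≤ aseq1 (n+1) := by
  intro n
  match n with
  | 0 | 1 | 2 | 3 | 4 | 5 => norm_num [aseq1]
  | (m+6) =>
    rw [show m+6+1 = m+7 from rfl, aseq1_tail]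
    split_ifs <;> norm_num

lemma ha2 : ∀ n, 1 ≤ aseq2 (n+1) := by
  intro n
  match n with
  | 0 | 1 | 2 | 3 | 4 | 5 | 6 => norm_num [aseq2]
  | (m+7) =>
    rw [show m+7+1 = m+8 from rfl, aseq2_tail]
    split_ifs <;> norm_num

lemma hs1 : ∀ n, 1 ≤ sfun1 (n+1) := by
  intro n
  have hl := sqrt3_lb
  have hu := sqrt3_ub
  match n with
  | 0 => rw [show sfun1 1 = (10954 + 4*Real.sqrt 3)/2893 by norm_num [sfun1],
      le_div_iff₀ (by norm_num)]; nlinarith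
  | 1 => rw [show sfun1 2 = (2275 - 4*Real.sqrt 3)/1789 by norm_num [sfun1],
      le_div_iff₀ (by norm_num)]; nlinarith
  | 2 => rw [show sfun1 3 = (243 + 2*Real.sqrt 3)/66 by norm_num [sfun1],
      le_div_iff₀ (by norm_num)]; nlinarith
  | 3 => rw [show sfun1 4 = (90 - 4*Real.sqrt 3)/61 by norm_num [sfun1],
      le_div_iff₀ (by norm_num)]; nlinarith
  | 4 => rw [show sfun1 5 = (29 + 4*Real.sqrt 3)/13 by norm_num [sfun1],
      le_div_iff₀ (by norm_num)]; nlinarith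
  | 5 => rw [show sfun1 6 = (4*Real.sqrt 3 - 3)/3 by norm_num [sfun1],
      le_div_iff₀ (by norm_num)]; nlinarith
  | (m+6) =>
    rw [show m+6+1 = m+7 from rfl, sfun1_tail]
    split_ifs <;> rw [le_div_iff₀ (by norm_num)] <;> nlinarith

lemma hs2 : ∀ n, 1 ≤ sfun2 (n+1) := by
  intro n
  have hl := sqrt21_lb
  have hu := sqrt21_ub
  match n with
  | 0 => rw [show sfun2 1 = (10181 - Real.sqrt 21)/2686 by norm_num [sfun2],
      le_div_iff₀ (by norm_num)]; nlinarith
  | 1 => rw [show sfun2 2 = (2123 + Real.sqrt 21)/1678 by norm_num [sfun2],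
      le_div_iff₀ (by norm_num)]; nlinarith
  | 2 => rw [show sfun2 3 = (445 - Real.sqrt 21)/118 by norm_num [sfun2],
      le_div_iff₀ (by norm_num)]; nlinarith
  | 3 => rw [show sfun2 4 = (91 + Real.sqrt 21)/70 by norm_num [sfun2],
      le_div_iff₀ (by norm_num)]; nlinarith
  | 4 => rw [show sfun2 5 = (21 - Real.sqrt 21)/6 by norm_num [sfun2],
      le_div_iff₀ (by norm_num)]; nlinarith
  | 5 => rw [show sfun2 6 = (9 + Real.sqrt 21)/10 by norm_num [sfun2],
      le_div_iff₀ (by norm_num)]; nlinarith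
  | 6 => rw [show sfun2 7 = (1 + Real.sqrt 21)/2 by norm_num [sfun2],
      le_div_iff₀ (by norm_num)]; nlinarith
  | (m+7) =>
    rw [show m+7+1 = m+8 from rfl, sfun2_tail]
    split_ifs <;> rw [le_div_iff₀ (by norm_num)] <;> nlinarith

lemma hrec1 : ∀ n, sfun1 n = aseq1 n + 1 / sfun1 (n+1) := by
  intro n
  have h3 : Real.sqrt 3 ^ 2 = 3 := Real.sq_sqrt (by norm_num)
  have hl := sqrt3_lb
  have hu := sqrt3_ub
  match n with
  | 0 =>
    rw [show sfun1 0 = (10954 - 4*Real.sqrt 3)/41476 by norm_num [sfun1],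
      show sfun1 1 = (10954 + 4*Real.sqrt 3)/2893 by norm_num [sfun1],
      show aseq1 0 = 0 by norm_num [aseq1]]
    exact cf_step _ _ _ (by positivity) (by linear_combination (-16/119990068 : ℝ) * h3)
  | 1 =>
    rw [show sfun1 1 = (10954 + 4*Real.sqrt 3)/2893 by norm_num [sfun1],
      show sfun1 2 = (2275 - 4*Real.sqrt 3)/1789 by norm_num [sfun1],
      show aseq1 1 = 3 by norm_num [aseq1]]
    exact cf_step _ _ _ (by nlinarith) (by linear_combination (-16/5175577 : ℝ) * h3)
  | 2 =>
    rw [show sfun1 2 = (2275 - 4*Real.sqrt 3)/1789 by norm_num [sfun1],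
      show sfun1 3 = (243 + 2*Real.sqrt 3)/66 by norm_num [sfun1],
      show aseq1 2 = 1 by norm_num [aseq1]]
    exact cf_step _ _ _ (by positivity) (by linear_combination (-8/118074 : ℝ) * h3)
  | 3 =>
    rw [show sfun1 3 = (243 + 2*Real.sqrt 3)/66 by norm_num [sfun1],
      show sfun1 4 = (90 - 4*Real.sqrt 3)/61 by norm_num [sfun1],
      show aseq1 3 = 3 by norm_num [aseq1]]
    exact cf_step _ _ _ (by nlinarith) (by linear_combination (-8/4026 : ℝ) * h3)
  | 4 =>
    rw [show sfun1 4 = (90 - 4*Real.sqrt 3)/61 by norm_num [sfun1],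
      show sfun1 5 = (29 + 4*Real.sqrt 3)/13 by norm_num [sfun1],
      show aseq1 4 = 1 by norm_num [aseq1]]
    exact cf_step _ _ _ (by positivity) (by linear_combination (-16/793 : ℝ) * h3)
  | 5 =>
    rw [show sfun1 5 = (29 + 4*Real.sqrt 3)/13 by norm_num [sfun1],
      show sfun1 6 = (4*Real.sqrt 3 - 3)/3 by norm_num [sfun1],
      show aseq1 5 = 2 by norm_num [aseq1]]
    exact cf_step _ _ _ (by nlinarith) (by linear_combination (16/39 : ℝ) * h3)
  | 6 =>
    rw [show sfun1 6 = (4*Real.sqrt 3 - 3)/3 by norm_num [sfun1],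
      show sfun1 7 = (3 + 2*Real.sqrt 3)/2 by
        rw [show (7:ℕ) = 0+7 from rfl, sfun1_tail]; norm_num,
      show aseq1 6 = 1 by norm_num [aseq1]]
    exact cf_step _ _ _ (by positivity) (by linear_combination (4/3 : ℝ) * h3)
  | (m+7) =>
    rcases Nat.even_or_odd m with hm | hm
    · have hm2 : m % 2 = 0 := Nat.even_iff.mp hm
      rw [show sfun1 (m+7) = (3 + 2*Real.sqrt 3)/2 by rw [sfun1_tail, if_pos hm2],
        show sfun1 (m+7+1) = (6 + 4*Real.sqrt 3)/3 by
          rw [show m+7+1 = (m+1)+7 by omega, sfun1_tail, if_neg (by omega)],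
        show aseq1 (m+7) = 3 by rw [aseq1_tail, if_pos hm2]]
      exact cf_step _ _ _ (by positivity) (by linear_combination (4/3 : ℝ) * h3)
    · have hm2 : ¬ (m % 2 = 0) := by have := Nat.odd_iff.mp hm; omega
      rw [show sfun1 (m+7) = (6 + 4*Real.sqrt 3)/3 by rw [sfun1_tail, if_neg hm2],
        show sfun1 (m+7+1) = (3 + 2*Real.sqrt 3)/2 by
          rw [show m+7+1 = (m+1)+7 by omega, sfun1_tail, if_pos (by omega)],
        show aseq1 (m+7) = 4 by rw [aseq1_tail, if_neg hm2]]
      exact cf_step _ _ _ (by positivity) (by linear_combination (4/3 : ℝ) * h3)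

lemma hrec2 : ∀ n, sfun2 n = aseq2 n + 1 / sfun2 (n+1) := by
  intro n
  have h3 : Real.sqrt 21 ^ 2 = 21 := Real.sq_sqrt (by norm_num)
  have hl := sqrt21_lb
  have hu := sqrt21_ub
  match n with
  | 0 =>
    rw [show sfun2 0 = (10181 + Real.sqrt 21)/38590 by norm_num [sfun2],
      show sfun2 1 = (10181 - Real.sqrt 21)/2686 by norm_num [sfun2],
      show aseq2 0 = 0 by norm_num [aseq2]]
    exact cf_step _ _ _ (by nlinarith) (by linear_combination (-1/103652740 : ℝ) * h3)
  | 1 =>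
    rw [show sfun2 1 = (10181 - Real.sqrt 21)/2686 by norm_num [sfun2],
      show sfun2 2 = (2123 + Real.sqrt 21)/1678 by norm_num [sfun2],
      show aseq2 1 = 3 by norm_num [aseq2]]
    exact cf_step _ _ _ (by positivity) (by linear_combination (-1/4507108 : ℝ) * h3)
  | 2 =>
    rw [show sfun2 2 = (2123 + Real.sqrt 21)/1678 by norm_num [sfun2],
      show sfun2 3 = (445 - Real.sqrt 21)/118 by norm_num [sfun2],
      show aseq2 2 = 1 by norm_num [aseq2]]
    exact cf_step _ _ _ (by nlinarith) (by linear_combination (-1/198004 : ℝ) * h3)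
  | 3 =>
    rw [show sfun2 3 = (445 - Real.sqrt 21)/118 by norm_num [sfun2],
      show sfun2 4 = (91 + Real.sqrt 21)/70 by norm_num [sfun2],
      show aseq2 3 = 3 by norm_num [aseq2]]
    exact cf_step _ _ _ (by positivity) (by linear_combination (-1/8260 : ℝ) * h3)
  | 4 =>
    rw [show sfun2 4 = (91 + Real.sqrt 21)/70 by norm_num [sfun2],
      show sfun2 5 = (21 - Real.sqrt 21)/6 by norm_num [sfun2],
      show aseq2 4 = 1 by norm_num [aseq2]]
    exact cf_step _ _ _ (by nlinarith) (by linear_combination (-1/420 : ℝ) * h3)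
  | 5 =>
    rw [show sfun2 5 = (21 - Real.sqrt 21)/6 by norm_num [sfun2],
      show sfun2 6 = (9 + Real.sqrt 21)/10 by norm_num [sfun2],
      show aseq2 5 = 2 by norm_num [aseq2]]
    exact cf_step _ _ _ (by positivity) (by linear_combination (-1/60 : ℝ) * h3)
  | 6 =>
    rw [show sfun2 6 = (9 + Real.sqrt 21)/10 by norm_num [sfun2],
      show sfun2 7 = (1 + Real.sqrt 21)/2 by norm_num [sfun2],
      show aseq2 6 = 1 by norm_num [aseq2]]
    exact cf_step _ _ _ (by positivity) (by linear_combination (1/20 : ℝ) * h3)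
  | 7 =>
    rw [show sfun2 7 = (1 + Real.sqrt 21)/2 by norm_num [sfun2],
      show sfun2 8 = (3 + Real.sqrt 21)/6 by
        rw [show (8:ℕ) = 0+8 from rfl, sfun2_tail]; norm_num,
      show aseq2 7 = 2 by norm_num [aseq2]]
    exact cf_step _ _ _ (by positivity) (by linear_combination (1/12 : ℝ) * h3)
  | (m+8) =>
    rcases Nat.even_or_odd m with hm | hm
    · have hm2 : m % 2 = 0 := Nat.even_iff.mp hm
      rw [show sfun2 (m+8) = (3 + Real.sqrt 21)/6 by rw [sfun2_tail, if_pos hm2],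
        show sfun2 (m+8+1) = (3 + Real.sqrt 21)/2 by
          rw [show m+8+1 = (m+1)+8 by omega, sfun2_tail, if_neg (by omega)],
        show aseq2 (m+8) = 1 by rw [aseq2_tail, if_pos hm2]]
      exact cf_step _ _ _ (by positivity) (by linear_combination (1/12 : ℝ) * h3)
    · have hm2 : ¬ (m % 2 = 0) := by have := Nat.odd_iff.mp hm; omega
      rw [show sfun2 (m+8) = (3 + Real.sqrt 21)/2 by rw [sfun2_tail, if_neg hm2],
        show sfun2 (m+8+1) = (3 + Real.sqrt 21)/6 by
          rw [show m+8+1 = (m+1)+8 by omega, sfun2_tail, if_pos (by omega)],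
        show aseq2 (m+8) = 3 by rw [aseq2_tail, if_neg hm2]]
      exact cf_step _ _ _ (by positivity) (by linear_combination (1/12 : ℝ) * h3)
end

/-- With `α = [0; ̅ 3,1,3,1,2,1] = (2√462−29)/53`,
`α₁ = [0; 3,1,3,1,2,1, ̅ 3,4]` and `α₂ = [0; 3,1,3,1,2,1,2, ̅ 1,3]`, one has
`(α₁ − α)/(α₂ − α₁) < 1`. -/
theorem stmt_8 (α α₁ α₂ : ℝ)
    (hα : α = (2 * Real.sqrt 462 - 29) / 53)
    (hα₁ : IsCFVal (fun n => if n = 0 then 0 else if n ≤ 6 then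
      ([3, 1, 3, 1, 2, 1].getD (n - 1) 0 : ℝ)
      else if (n - 7) % 2 = 0 then 3 else 4) α₁)
    (hα₂ : IsCFVal (fun n => if n = 0 then 0 else if n ≤ 7 then
      ([3, 1, 3, 1, 2, 1, 2].getD (n - 1) 0 : ℝ)
      else if (n - 8) % 2 = 0 then 1 else 3) α₂) :
    (α₁ - α) / (α₂ - α₁) < 1 := by
  have k1 : IsCFVal aseq1 (sfun1 0) := cfVal_of_tail aseq1 sfun1 ha1 hs1 hrec1
  have k2 : IsCFVal aseq2 (sfun2 0) := cfVal_of_tail aseq2 sfun2 ha2 hs2 hrec2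
  have e1 : α₁ = sfun1 0 := tendsto_nhds_unique hα₁ k1
  have e2 : α₂ = sfun2 0 := tendsto_nhds_unique hα₂ k2
  rw [hα, e1, e2, show sfun1 0 = (10954 - 4*Real.sqrt 3)/41476 by norm_num [sfun1],
    show sfun2 0 = (10181 + Real.sqrt 21)/38590 by norm_num [sfun2]]
  have l3 := sqrt3_lb
  have u3 := sqrt3_ub
  have l21 := sqrt21_lb
  have u21 := sqrt21_ub
  have l462 := sqrt462_lb
  have u462 := sqrt462_ub
  have hpos : (0:ℝ) < (10181 + Real.sqrt 21)/38590 - (10954 - 4*Real.sqrt 3)/41476 := by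
    linarith
  rw [div_lt_one hpos]
  linarith
end

section
/- Suppose A, B ⊆ ℝ, A ⊆ [a, a'] ∪ [a'', ∞) with a ≤ a' < a'', B ⊆ [b, b'] ∪ [b'', ∞) with b ≤ b' < b'', and suppose b' − b < a'' − a' and a' − a < b'' − b'. Then there exists a nonempty open interval I ⊂ ℝ with I ∩ (A + B) = ∅ and inf I ≥ a + b. -/
open scoped Pointwise

/-- If `A ⊆ [a,a'] ∪ [a'',∞)` with `a ≤ a' < a''`, `B ⊆ [b,b'] ∪ [b'',∞)` with
`b ≤ b' < b''`, and `b'−b < a''−a'`, `a'−a < b''−b'`, then there is a nonempty open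
interval disjoint from `A + B` whose infimum is at least `a + b`. -/
theorem stmt_10 (A B : Set ℝ) (a a' a'' b b' b'' : ℝ)
    (ha1 : a ≤ a') (ha2 : a' < a'') (hb1 : b ≤ b') (hb2 : b' < b'')
    (hA : A ⊆ Set.Icc a a' ∪ Set.Ici a'') (hB : B ⊆ Set.Icc b b' ∪ Set.Ici b'')
    (h1 : b' - b < a'' - a') (h2 : a' - a < b'' - b') :
    ∃ u v : ℝ, u < v ∧ a + b ≤ u ∧ Set.Ioo u v ∩ (A + B) = ∅ := by
  refine ⟨a' + b', min (a + b'') (a'' + b), ?_, by linarith, ?_⟩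
  · exact lt_min (by linarith) (by linarith)
  · ext x
    simp only [Set.mem_inter_iff, Set.mem_Ioo, Set.mem_empty_iff_false, iff_false, not_and]
    rintro ⟨hx1, hx2⟩ ⟨p, hp, q, hq, rfl⟩
    simp only [Set.mem_Icc, Set.mem_Ici] at *
    have h3 := lt_min_iff.mp hx2
    rcases hA hp with hp' | hp' <;> rcases hB hq with hq' | hq' <;>
      simp only [Set.mem_Icc, Set.mem_Ici] at hp' hq' <;>
      [linarith [hp'.2, hq'.2]; linarith [hp'.1, h3.1]; linarith [hq'.1, h3.2]; linarith [h3.2]]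
end

section
/- The value of the doubly-infinite periodic continued-fraction sum λ₀(\overline{1,1,1,2,1,2,1,1,3,3,3}) = [3; 3,3,1,1,2,1,2,1,1,1, 3,3,3,1,1,2,1,2,1,1,1, …] + [0; 1,1,1,2,1,2,1,1,3,3,3, 1,1,1,2,1,2,1,1,3,3,3, …] satisfies 3.9387762419810 < λ₀ < 3.9387762419811. -/
namespace CFAux

lemma cfQ_pos (a : ℕ → ℝ) (ha : ∀ n, 1 ≤ a (n + 1)) :
    ∀ n, 0 < (cfQ a n).1 ∧ 0 ≤ (cfQ a n).2 := by
  intro n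
  induction n with
  | zero => simp [cfQ]
  | succ k ih =>
    constructor
    · have h := ha k
      simp only [cfQ]
      nlinarith [ih.1, ih.2]
    · simp only [cfQ]
      exact ih.1.le

lemma cfP_snd (a : ℕ → ℝ) (n : ℕ) : (cfP a (n + 1)).2 = (cfP a n).1 := by
  simp [cfP]

lemma cfQ_snd (a : ℕ → ℝ) (n : ℕ) : (cfQ a (n + 1)).2 = (cfQ a n).1 := by
  simp [cfQ]

lemma cfPQ_det (a : ℕ → ℝ) :
    ∀ n, (cfP a n).1 * (cfQ a n).2 - (cfP a n).2 * (cfQ a n).1 = (-1) ^ (n + 1) := by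
  intro n
  induction n with
  | zero => simp [cfP, cfQ]
  | succ k ih =>
    simp only [cfP, cfQ]
    rw [pow_succ]
    linear_combination (-1 : ℝ) * ih

lemma det' (a : ℕ → ℝ) (n : ℕ) :
    (cfP a (n + 1)).1 * (cfQ a n).1 - (cfP a n).1 * (cfQ a (n + 1)).1 = (-1) ^ n := by
  have h := cfPQ_det a (n + 1)
  rw [cfP_snd, cfQ_snd] at h
  have hpow : ((-1 : ℝ)) ^ (n + 1 + 1) = (-1) ^ n := by
    rw [pow_succ, pow_succ]; ring
  linear_combination h + hpow

lemma conv_succ_sub (a : ℕ → ℝ) (ha : ∀ n, 1 ≤ a (n + 1)) (n : ℕ) :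
    cfConv a (n + 1) - cfConv a n = (-1) ^ n / ((cfQ a (n + 1)).1 * (cfQ a n).1) := by
  have h1 := (cfQ_pos a ha (n + 1)).1
  have h0 := (cfQ_pos a ha n).1
  have hd := det' a n
  unfold cfConv
  rw [div_sub_div _ _ h1.ne' h0.ne']
  congr 1
  linear_combination hd

lemma conv_two_sub (a : ℕ → ℝ) (ha : ∀ n, 1 ≤ a (n + 1)) (n : ℕ) :
    cfConv a (n + 2) - cfConv a n
      = a (n + 2) * (-1) ^ n / ((cfQ a (n + 2)).1 * (cfQ a n).1) := by
  have h2 := (cfQ_pos a ha (n + 2)).1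
  have h0 := (cfQ_pos a ha n).1
  have hd := det' a n
  have hp : (cfP a (n + 2)).1 = a (n + 2) * (cfP a (n + 1)).1 + (cfP a n).1 := by
    simp [cfP, cfP_snd]
  have hq : (cfQ a (n + 2)).1 = a (n + 2) * (cfQ a (n + 1)).1 + (cfQ a n).1 := by
    simp [cfQ, cfQ_snd]
  unfold cfConv
  rw [div_sub_div _ _ h2.ne' h0.ne']
  congr 1
  rw [hp, hq]
  linear_combination a (n + 2) * hd

lemma stepA (a : ℕ → ℝ) (ha : ∀ n, 1 ≤ a (n + 1)) {n : ℕ} (hn : Even n) :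
    cfConv a n ≤ cfConv a (n + 1) := by
  have h := conv_succ_sub a ha n
  rw [hn.neg_one_pow] at h
  have h1 := (cfQ_pos a ha (n + 1)).1
  have h0 := (cfQ_pos a ha n).1
  nlinarith [div_pos one_pos (mul_pos h1 h0)]

lemma stepA' (a : ℕ → ℝ) (ha : ∀ n, 1 ≤ a (n + 1)) {n : ℕ} (hn : Odd n) :
    cfConv a (n + 1) ≤ cfConv a n := by
  have h := conv_succ_sub a ha n
  rw [hn.neg_one_pow] at h
  have h1 := (cfQ_pos a ha (n + 1)).1
  have h0 := (cfQ_pos a ha n).1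
  have : (-1 : ℝ) / ((cfQ a (n + 1)).1 * (cfQ a n).1) < 0 :=
    div_neg_of_neg_of_pos (by norm_num) (mul_pos h1 h0)
  linarith

lemma stepB (a : ℕ → ℝ) (ha : ∀ n, 1 ≤ a (n + 1)) {n : ℕ} (hn : Even n) :
    cfConv a n ≤ cfConv a (n + 2) := by
  have h := conv_two_sub a ha n
  rw [hn.neg_one_pow] at h
  have h2 := (cfQ_pos a ha (n + 2)).1
  have h0 := (cfQ_pos a ha n).1
  have haa : (0 : ℝ) < a (n + 2) := lt_of_lt_of_le one_pos (ha (n + 1))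
  nlinarith [div_pos (by nlinarith : (0:ℝ) < a (n + 2) * 1) (mul_pos h2 h0)]

lemma stepC (a : ℕ → ℝ) (ha : ∀ n, 1 ≤ a (n + 1)) {n : ℕ} (hn : Odd n) :
    cfConv a (n + 2) ≤ cfConv a n := by
  have h := conv_two_sub a ha n
  rw [hn.neg_one_pow] at h
  have h2 := (cfQ_pos a ha (n + 2)).1
  have h0 := (cfQ_pos a ha n).1
  have haa : (0 : ℝ) < a (n + 2) := lt_of_lt_of_le one_pos (ha (n + 1))
  have : a (n + 2) * (-1) / ((cfQ a (n + 2)).1 * (cfQ a n).1) < 0 := by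
    apply div_neg_of_neg_of_pos (by nlinarith) (mul_pos h2 h0)
  linarith

lemma conv_bounds (a : ℕ → ℝ) (ha : ∀ n, 1 ≤ a (n + 1)) {M : ℕ} (hM : Even M) :
    ∀ n, M ≤ n → cfConv a M ≤ cfConv a n ∧ cfConv a n ≤ cfConv a (M + 1) := by
  intro n
  induction n using Nat.strong_induction_on with
  | _ n ih =>
    intro hn
    rcases Nat.lt_or_ge n (M + 2) with h | h
    · have hcase : n = M ∨ n = M + 1 := by omega
      rcases hcase with rfl | rfl
      · exact ⟨le_refl _, stepA a ha hM⟩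
      · exact ⟨stepA a ha hM, le_refl _⟩
    · obtain ⟨m, rfl⟩ : ∃ m, n = m + 2 := ⟨n - 2, by omega⟩
      have ihm := ih m (by omega) (by omega)
      have ihm1 := ih (m + 1) (by omega) (by omega)
      rcases Nat.even_or_odd m with hm | hm
      · have hodd : Odd (m + 1) := Even.add_one hm
        refine ⟨le_trans ihm.1 (stepB a ha hm), le_trans ?_ ihm1.2⟩
        exact stepA' a ha hodd
      · have heven : Even (m + 1) := Odd.add_one hm
        refine ⟨le_trans ihm1.1 ?_, le_trans (stepC a ha hm) ihm.2⟩
        exact stepA a ha heven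

end CFAux

/-- The value of `λ₀` for the bi-infinite periodic sequence with period word
`1,1,1,2,1,2,1,1,3,3,3` and 0th position at the final `3`, i.e.
`[3; 3,3,1,1,2,1,2,1,1,1, 3,3,3,1,1,2,1,2,1,1,1, …] + [0; ̅ 1,1,1,2,1,2,1,1,3,3,3]`,
lies strictly between `3.9387762419810` and `3.9387762419811`. -/
theorem stmt_11 (ℓL ℓR : ℝ)
    (hL : IsCFVal (fun n => if n = 0 then 3 else
      ([3, 3, 1, 1, 2, 1, 2, 1, 1, 1, 3].getD ((n - 1) % 11) 0 : ℝ)) ℓL)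
    (hR : IsCFVal (fun n => if n = 0 then 0 else
      ([1, 1, 1, 2, 1, 2, 1, 1, 3, 3, 3].getD ((n - 1) % 11) 0 : ℝ)) ℓR) :
    3.9387762419810 < ℓL + ℓR ∧ ℓL + ℓR < 3.9387762419811 := by
  set aL : ℕ → ℝ := fun n => if n = 0 then 3 else
      ([3, 3, 1, 1, 2, 1, 2, 1, 1, 1, 3].getD ((n - 1) % 11) 0 : ℝ) with haLdef
  set aR : ℕ → ℝ := fun n => if n = 0 then 0 else
      ([1, 1, 1, 2, 1, 2, 1, 1, 3, 3, 3].getD ((n - 1) % 11) 0 : ℝ) with haRdef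
  have haL : ∀ n, 1 ≤ aL (n + 1) := by
    intro n
    simp only [haLdef, Nat.add_sub_cancel, if_neg (Nat.succ_ne_zero n)]
    have hk : n % 11 < 11 := Nat.mod_lt _ (by norm_num)
    set m := n % 11 with hm
    interval_cases m <;> norm_num
  have haR : ∀ n, 1 ≤ aR (n + 1) := by
    intro n
    simp only [haRdef, Nat.add_sub_cancel, if_neg (Nat.succ_ne_zero n)]
    have hk : n % 11 < 11 := Nat.mod_lt _ (by norm_num)
    set m := n % 11 with hm
    interval_cases m <;> norm_num
  have hM : Even 22 := by decide
  have hbL := CFAux.conv_bounds aL haL hM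
  have hbR := CFAux.conv_bounds aR haR hM
  have hLlo : cfConv aL 22 ≤ ℓL :=
    ge_of_tendsto hL (Filter.eventually_atTop.2 ⟨22, fun n hn => (hbL n hn).1⟩)
  have hLhi : ℓL ≤ cfConv aL 23 :=
    le_of_tendsto hL (Filter.eventually_atTop.2 ⟨22, fun n hn => (hbL n hn).2⟩)
  have hRlo : cfConv aR 22 ≤ ℓR :=
    ge_of_tendsto hR (Filter.eventually_atTop.2 ⟨22, fun n hn => (hbR n hn).1⟩)
  have hRhi : ℓR ≤ cfConv aR 23 :=
    le_of_tendsto hR (Filter.eventually_atTop.2 ⟨22, fun n hn => (hbR n hn).2⟩)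
  have eL22 : cfConv aL 22 = 32823127 / 9931588 := by
    norm_num [haLdef, cfConv, cfP, cfQ, List.getD]
  have eL23 : cfConv aL 23 = 107501975 / 32527837 := by
    norm_num [haLdef, cfConv, cfP, cfQ, List.getD]
  have eR22 : cfConv aR 22 = 5725345 / 9032594 := by
    norm_num [haRdef, cfConv, cfP, cfQ, List.getD]
  have eR23 : cfConv aR 23 = 7457714 / 11765667 := by
    norm_num [haRdef, cfConv, cfP, cfQ, List.getD]
  rw [eL22] at hLlo
  rw [eL23] at hLhi
  rw [eR22] at hRlo
  rw [eR23] at hRhi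
  constructor
  · have : (3.9387762419810 : ℝ) < 32823127 / 9931588 + 5725345 / 9032594 := by norm_num
    linarith
  · have : (107501975 / 32527837 + 7457714 / 11765667 : ℝ) < 3.9387762419811 := by norm_num
    linarith
end

section
/- For any bi-infinite sequence (a_i) ∈ {1,2,3}^ℤ with a_{−1} = 2, a_0 = 3, a_1 = 2, one has λ₀((a_i)) < 3.884. -/
lemma cfPQ_shift (a : ℕ → ℝ) : ∀ n : ℕ,
    cfP a (n+1) = (a 0 * (cfP (fun k => a (k+1)) n).1 + (cfQ (fun k => a (k+1)) n).1,
                   a 0 * (cfP (fun k => a (k+1)) n).2 + (cfQ (fun k => a (k+1)) n).2) ∧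
    cfQ a (n+1) = cfP (fun k => a (k+1)) n := by
  intro n
  induction n with
  | zero => simp [cfP, cfQ]; ring
  | succ n ih =>
    constructor
    · show (a (n+2) * (cfP a (n+1)).1 + (cfP a (n+1)).2, (cfP a (n+1)).1) = _
      rw [ih.1]
      show _ = (a 0 * (cfP (fun k => a (k+1)) (n+1)).1 + (cfQ (fun k => a (k+1)) (n+1)).1,
                a 0 * (cfP (fun k => a (k+1)) (n+1)).2 + (cfQ (fun k => a (k+1)) (n+1)).2)
      show _ = (a 0 * ((fun k => a (k+1)) (n+1) * (cfP (fun k => a (k+1)) n).1 + (cfP (fun k => a (k+1)) n).2)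
          + ((fun k => a (k+1)) (n+1) * (cfQ (fun k => a (k+1)) n).1 + (cfQ (fun k => a (k+1)) n).2),
          a 0 * (cfP (fun k => a (k+1)) n).1 + (cfQ (fun k => a (k+1)) n).1)
      apply Prod.ext <;> simp <;> ring
    · show (a (n+2) * (cfQ a (n+1)).1 + (cfQ a (n+1)).2, (cfQ a (n+1)).1) = _
      rw [ih.2]
      rfl

lemma cfP_pos (a : ℕ → ℝ) (h : ∀ k, 1 ≤ a k) : ∀ n, 0 < (cfP a n).1 ∧ 0 < (cfP a n).2 := by
  intro n
  induction n with
  | zero => simp [cfP]; linarith [h 0]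
  | succ n ih =>
    refine ⟨?_, ih.1⟩
    show 0 < a (n+1) * (cfP a n).1 + (cfP a n).2
    nlinarith [h (n+1), ih.1, ih.2]

lemma cfQ_pos (a : ℕ → ℝ) (h : ∀ k, 1 ≤ a (k+1)) : ∀ n, 0 < (cfQ a n).1 ∧ 0 ≤ (cfQ a n).2 := by
  intro n
  induction n with
  | zero => simp [cfQ]
  | succ n ih =>
    refine ⟨?_, ih.1.le⟩
    show 0 < a (n+1) * (cfQ a n).1 + (cfQ a n).2
    nlinarith [h n, ih.1, ih.2]

lemma cfConv_succ (a : ℕ → ℝ) (h : ∀ k, 1 ≤ a (k+1)) (n : ℕ) :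
    cfConv a (n+1) = a 0 + 1 / cfConv (fun k => a (k+1)) n := by
  obtain ⟨h1, h2⟩ := cfPQ_shift a n
  have hP := (cfP_pos (fun k => a (k+1)) (fun k => h k) n).1
  have hQ := (cfQ_pos (fun k => a (k+1)) (fun k => h (k+1)) n).1
  unfold cfConv
  rw [h1, h2]
  simp only
  field_simp
  try ring

lemma conv_mem : ∀ (n : ℕ) (a : ℕ → ℝ), (∀ k, 1 ≤ a k ∧ a k ≤ 3) →
    a 0 ≤ cfConv a n ∧ cfConv a n ≤ a 0 + 1 := by
  intro n
  induction n with
  | zero => intro a _; simp [cfConv, cfP, cfQ]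
  | succ n ih =>
    intro a ha
    rw [cfConv_succ a (fun k => (ha (k+1)).1)]
    obtain ⟨hc1, hc2⟩ := ih (fun k => a (k+1)) (fun k => ha (k+1))
    have h1 : (1:ℝ) ≤ cfConv (fun k => a (k+1)) n := le_trans (ha 1).1 hc1
    have h4 : cfConv (fun k => a (k+1)) n ≤ 4 := by linarith [(ha 1).2]
    have : 1/4 ≤ 1 / cfConv (fun k => a (k+1)) n := by
      rw [div_le_div_iff₀ (by norm_num) (by linarith)]; linarith
    have : 1 / cfConv (fun k => a (k+1)) n ≤ 1 := by
      rw [div_le_one (by linarith)]; linarith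
    constructor <;> linarith

lemma lower_bound (a : ℕ → ℝ) (hd : ∀ k, 1 ≤ a k ∧ a k ≤ 3) (h0 : a 0 = 2) :
    ∀ n, 43/19 ≤ cfConv a (n+3) := by
  intro n
  set s1 : ℕ → ℝ := fun k => a (k+1) with hs1
  set s2 : ℕ → ℝ := fun k => a (k+2) with hs2
  set s3 : ℕ → ℝ := fun k => a (k+3) with hs3
  have hd1 : ∀ k, 1 ≤ s1 k ∧ s1 k ≤ 3 := fun k => hd (k+1)
  have hd2 : ∀ k, 1 ≤ s2 k ∧ s2 k ≤ 3 := fun k => hd (k+2)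
  have hd3 : ∀ k, 1 ≤ s3 k ∧ s3 k ≤ 3 := fun k => hd (k+3)
  have e1 : cfConv a (n+3) = a 0 + 1 / cfConv s1 (n+2) := cfConv_succ a (fun k => (hd (k+1)).1) (n+2)
  have e2 : cfConv s1 (n+2) = s1 0 + 1 / cfConv s2 (n+1) := cfConv_succ s1 (fun k => (hd1 (k+1)).1) (n+1)
  have e3 : cfConv s2 (n+1) = s2 0 + 1 / cfConv s3 n := cfConv_succ s2 (fun k => (hd2 (k+1)).1) n
  obtain ⟨hc41, hc42⟩ := conv_mem n s3 hd3
  have hc4a : (1:ℝ) ≤ cfConv s3 n := le_trans (hd3 0).1 hc41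
  have hc4b : cfConv s3 n ≤ 4 := by linarith [(hd3 0).2]
  -- c3 = cfConv s2 (n+1) ≥ 1 + 1/4 = 5/4
  have hinv4 : 1/4 ≤ 1 / cfConv s3 n := by
    rw [div_le_div_iff₀ (by norm_num) (by linarith)]; linarith
  have hc3 : (5/4 : ℝ) ≤ cfConv s2 (n+1) := by
    rw [e3]; linarith [(hd2 0).1]
  have hc3pos : (0:ℝ) < cfConv s2 (n+1) := by linarith
  -- c2 = cfConv s1 (n+2) ≤ 3 + 4/5 = 19/5, and ≥ 1
  have hinv3 : 1 / cfConv s2 (n+1) ≤ 4/5 := by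
    rw [div_le_div_iff₀ hc3pos (by norm_num)]; linarith
  have hc2 : cfConv s1 (n+2) ≤ 19/5 := by
    rw [e2]; linarith [(hd1 0).2]
  have hc2pos : (0:ℝ) < cfConv s1 (n+2) := by
    rw [e2]; have : 0 < 1 / cfConv s2 (n+1) := by positivity
    linarith [(hd1 0).1]
  have hinv2 : 5/19 ≤ 1 / cfConv s1 (n+2) := by
    rw [div_le_div_iff₀ (by norm_num) hc2pos]; linarith
  rw [e1, h0]; linarith

/-- For any bi-infinite sequence with digits in `{1,2,3}` and central pattern `2 3* 2`, one has `λ₀ < 3.884`. -/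
theorem stmt_13 (a : ℤ → ℕ) (hdig : ∀ i, 1 ≤ a i ∧ a i ≤ 3)
    (hm1 : a (-1) = 2) (h0 : a 0 = 3) (h1 : a 1 = 2)
    (ℓL ℓR : ℝ)
    (hL : IsCFVal (fun k => (a (-(k : ℤ)) : ℝ)) ℓL)
    (hR : IsCFVal (fun k => if k = 0 then 0 else (a k : ℝ)) ℓR) :
    ℓL + ℓR < 3.884 := by
  set aL : ℕ → ℝ := fun k => (a (-(k : ℤ)) : ℝ) with haL
  set aR : ℕ → ℝ := fun k => if k = 0 then 0 else (a k : ℝ) with haR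
  have hdL : ∀ k, 1 ≤ aL (k+1) := by
    intro k
    simp only [haL]
    exact_mod_cast (hdig _).1
  have hdR : ∀ k, 1 ≤ aR (k+1) := by
    intro k
    simp only [haR, if_neg (Nat.succ_ne_zero k)]
    exact_mod_cast (hdig _).1
  -- the shifted sequences
  have hsL : ∀ k, 1 ≤ (fun k => aL (k+1)) k ∧ (fun k => aL (k+1)) k ≤ 3 := by
    intro k
    constructor
    · exact hdL k
    · simp only [haL]; exact_mod_cast (hdig _).2
  have hsR : ∀ k, 1 ≤ (fun k => aR (k+1)) k ∧ (fun k => aR (k+1)) k ≤ 3 := by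
    intro k
    refine ⟨hdR k, ?_⟩
    simp only [haR, if_neg (Nat.succ_ne_zero k)]
    exact_mod_cast (hdig _).2
  have hsL0 : (fun k => aL (k+1)) 0 = 2 := by
    simp only [haL]
    norm_num [hm1]
  have hsR0 : (fun k => aR (k+1)) 0 = 2 := by
    simp only [haR]
    norm_num [h1]
  have hL0 : aL 0 = 3 := by simp [haL, h0]
  have hR0 : aR 0 = 0 := by simp [haR]
  have hboundL : ∀ n, cfConv aL (n+4) ≤ 148/43 := by
    intro n
    rw [show n+4 = (n+3)+1 by ring, cfConv_succ aL hdL (n+3), hL0]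
    have hlb := lower_bound (fun k => aL (k+1)) hsL hsL0 n
    have hpos : (0:ℝ) < cfConv (fun k => aL (k+1)) (n+3) := by linarith
    have : 1 / cfConv (fun k => aL (k+1)) (n+3) ≤ 19/43 := by
      rw [div_le_div_iff₀ hpos (by norm_num)]; linarith
    linarith
  have hboundR : ∀ n, cfConv aR (n+4) ≤ 19/43 := by
    intro n
    rw [show n+4 = (n+3)+1 by ring, cfConv_succ aR hdR (n+3), hR0]
    have hlb := lower_bound (fun k => aR (k+1)) hsR hsR0 n
    have hpos : (0:ℝ) < cfConv (fun k => aR (k+1)) (n+3) := by linarith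
    have : 1 / cfConv (fun k => aR (k+1)) (n+3) ≤ 19/43 := by
      rw [div_le_div_iff₀ hpos (by norm_num)]; linarith
    linarith
  have hLle : ℓL ≤ 148/43 := by
    refine le_of_tendsto hL (Filter.eventually_atTop.2 ⟨4, fun n hn => ?_⟩)
    obtain ⟨m, rfl⟩ := Nat.exists_eq_add_of_le hn
    have := hboundL m
    rwa [Nat.add_comm] at this
  have hRle : ℓR ≤ 19/43 := by
    refine le_of_tendsto hR (Filter.eventually_atTop.2 ⟨4, fun n hn => ?_⟩)
    obtain ⟨m, rfl⟩ := Nat.exists_eq_add_of_le hn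
    have := hboundR m
    rwa [Nat.add_comm] at this
  norm_num
  linarith
end

section
/- For any bi-infinite sequence (a_i) ∈ {1,2,3,4}^ℤ with Markov value m((a_i)) < 4.528, the sequence cannot contain the subword 3,3,4 nor its transpose 4,3,3. -/
/-- `lam n` is `λₙ` of the bi-infinite sequence `a`: the sum of the values of the
continued fractions `[aₙ; aₙ₋₁, …]` and `[0; aₙ₊₁, …]`. -/
def IsLambda (a : ℤ → ℕ) (lam : ℤ → ℝ) : Prop :=
  ∀ n : ℤ, ∃ ℓL ℓR : ℝ,
    IsCFVal (fun k => (a (n - (k : ℤ)) : ℝ)) ℓL ∧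
    IsCFVal (fun k => if k = 0 then 0 else (a (n + (k : ℤ)) : ℝ)) ℓR ∧
    lam n = ℓL + ℓR

def cfS (a : ℕ → ℝ) : ℕ → ℝ := fun k => a (k + 1)

lemma cf_shift (a : ℕ → ℝ) : ∀ n : ℕ,
    (cfP a (n+1)).1 = a 0 * (cfP (cfS a) n).1 + (cfQ (cfS a) n).1 ∧
    (cfP a (n+1)).2 = a 0 * (cfP (cfS a) n).2 + (cfQ (cfS a) n).2 ∧
    (cfQ a (n+1)).1 = (cfP (cfS a) n).1 ∧
    (cfQ a (n+1)).2 = (cfP (cfS a) n).2 := by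
  intro n
  induction n with
  | zero =>
    refine ⟨?_, ?_, ?_, ?_⟩ <;> show (_ : ℝ) = _ <;> simp [cfP, cfQ, cfS] <;> ring
  | succ n ih =>
    obtain ⟨h1, h2, h3, h4⟩ := ih
    have eP1 : (cfP a (n+1+1)).1 = a (n+1+1) * (cfP a (n+1)).1 + (cfP a (n+1)).2 := rfl
    have eP2 : (cfP a (n+1+1)).2 = (cfP a (n+1)).1 := rfl
    have eQ1 : (cfQ a (n+1+1)).1 = a (n+1+1) * (cfQ a (n+1)).1 + (cfQ a (n+1)).2 := rfl
    have eQ2 : (cfQ a (n+1+1)).2 = (cfQ a (n+1)).1 := rfl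
    have fP1 : (cfP (cfS a) (n+1)).1
        = a (n+1+1) * (cfP (cfS a) n).1 + (cfP (cfS a) n).2 := rfl
    have fP2 : (cfP (cfS a) (n+1)).2 = (cfP (cfS a) n).1 := rfl
    have fQ1 : (cfQ (cfS a) (n+1)).1
        = a (n+1+1) * (cfQ (cfS a) n).1 + (cfQ (cfS a) n).2 := rfl
    have fQ2 : (cfQ (cfS a) (n+1)).2 = (cfQ (cfS a) n).1 := rfl
    refine ⟨?_, ?_, ?_, ?_⟩
    · rw [eP1, fP1, fQ1, h1, h2]; ring
    · rw [eP2, fP2, fQ2, h1]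
    · rw [eQ1, fP1, h3, h4]
    · rw [eQ2, fP2, h3]

lemma q_pos (a : ℕ → ℝ) (h1 : ∀ k, 1 ≤ a (k+1)) :
    ∀ n, 1 ≤ (cfQ a n).1 ∧ 0 ≤ (cfQ a n).2 := by
  intro n
  induction n with
  | zero => simp [cfQ]
  | succ n ih =>
    obtain ⟨ih1, ih2⟩ := ih
    constructor
    · simp only [cfQ]; nlinarith [h1 n]
    · simp only [cfQ]; linarith

lemma p_pos (a : ℕ → ℝ) (h : ∀ k, 1 ≤ a k) :
    ∀ n, 1 ≤ (cfP a n).1 ∧ 1 ≤ (cfP a n).2 := by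
  intro n
  induction n with
  | zero => simpa [cfP] using h 0
  | succ n ih =>
    obtain ⟨ih1, ih2⟩ := ih
    constructor
    · simp only [cfP]; nlinarith [h (n+1)]
    · simp only [cfP]; linarith

lemma conv_succ (a : ℕ → ℝ) (h1 : ∀ k, 1 ≤ a (k+1)) (n : ℕ) :
    cfConv a (n+1) = a 0 + 1 / cfConv (cfS a) n := by
  obtain ⟨hp1, _, hq1, _⟩ := cf_shift a n
  have hP : 1 ≤ (cfP (cfS a) n).1 := (p_pos (cfS a) (fun k => h1 k) n).1
  have hQ : 1 ≤ (cfQ (cfS a) n).1 := (q_pos (cfS a) (fun k => h1 (k+1)) n).1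
  unfold cfConv
  rw [hp1, hq1]
  field_simp

lemma conv_pos (a : ℕ → ℝ) (h : ∀ k, 1 ≤ a k) (n : ℕ) : 0 < cfConv a n := by
  have hP := (p_pos a h n).1
  have hQ := (q_pos a (fun k => h (k+1)) n).1
  exact div_pos (by linarith) (by linarith)

lemma conv_ge_first (a : ℕ → ℝ) (h1 : ∀ k, 1 ≤ a (k+1)) (n : ℕ) :
    a 0 ≤ cfConv a n := by
  cases n with
  | zero => simp [cfConv, cfP, cfQ]
  | succ n =>
    rw [conv_succ a h1 n]
    have := conv_pos (cfS a) (fun k => h1 k) n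
    have : 0 < 1 / cfConv (cfS a) n := by positivity
    linarith

lemma conv_le_first (a : ℕ → ℝ) (h1 : ∀ k, 1 ≤ a (k+1)) (n : ℕ) :
    cfConv a n ≤ a 0 + 1 := by
  cases n with
  | zero => simp [cfConv, cfP, cfQ]
  | succ n =>
    rw [conv_succ a h1 n]
    have hge : a 1 ≤ cfConv (cfS a) n := conv_ge_first (cfS a) (fun k => h1 (k+1)) n
    have h1' : (1:ℝ) ≤ cfConv (cfS a) n := le_trans (h1 0) hge
    have : 1 / cfConv (cfS a) n ≤ 1 := by
      rw [div_le_one (by linarith)]; linarith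
    linarith

lemma cf_step_s18 (a : ℕ → ℝ) (h1 : ∀ k, 1 ≤ a (k+1)) {x : ℝ} (hx : IsCFVal a x) :
    ∃ y : ℝ, IsCFVal (cfS a) y ∧ a 1 ≤ y ∧ y ≤ a 1 + 1 ∧ x = a 0 + 1 / y := by
  have hSd : ∀ k, 1 ≤ cfS a (k+1) := fun k => h1 (k+1)
  have hc1 : ∀ n, (1:ℝ) ≤ cfConv (cfS a) n := fun n =>
    le_trans (h1 0) (conv_ge_first (cfS a) hSd n)
  have hcle : ∀ n, cfConv (cfS a) n ≤ a 1 + 1 := fun n => by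
    have := conv_le_first (cfS a) hSd n
    simpa [cfS] using this
  have hx' : Filter.Tendsto (fun n => cfConv a (n+1)) Filter.atTop (nhds x) :=
    hx.comp (Filter.tendsto_add_atTop_nat 1)
  have hconv : ∀ n, cfConv a (n+1) = a 0 + 1 / cfConv (cfS a) n := conv_succ a h1
  have hxlb : a 0 + 1/(a 1 + 1) ≤ x := by
    refine ge_of_tendsto' hx' (fun n => ?_)
    rw [hconv n]
    have h1n := hc1 n
    have h2n := hcle n
    have : 1/(a 1 + 1) ≤ 1 / cfConv (cfS a) n := by
      apply one_div_le_one_div_of_le (by linarith) h2n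
    linarith
  have ha1 : (1:ℝ) ≤ a 1 := h1 0
  have hpos : 0 < x - a 0 := by
    have : (0:ℝ) < 1/(a 1 + 1) := by positivity
    linarith
  have hcinv : ∀ n, cfConv (cfS a) n = 1 / (cfConv a (n+1) - a 0) := by
    intro n
    have hne : cfConv (cfS a) n ≠ 0 := by have := hc1 n; linarith
    have e : a 0 + 1 / cfConv (cfS a) n - a 0 = 1 / cfConv (cfS a) n := by ring
    rw [hconv n, e, one_div_one_div]
  have hyval : Filter.Tendsto (cfConv (cfS a)) Filter.atTop (nhds (1/(x - a 0))) := by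
    have ht : Filter.Tendsto (fun n => 1 / (cfConv a (n+1) - a 0)) Filter.atTop
        (nhds (1/(x - a 0))) := by
      have hsub : Filter.Tendsto (fun n => cfConv a (n+1) - a 0) Filter.atTop
          (nhds (x - a 0)) := hx'.sub_const _
      simpa [one_div] using hsub.inv₀ hpos.ne'
    exact ht.congr (fun n => (hcinv n).symm)
  refine ⟨1/(x - a 0), hyval, ?_, ?_, ?_⟩
  · exact ge_of_tendsto' hyval (fun n => conv_ge_first (cfS a) hSd n)
  · exact le_of_tendsto' hyval hcle
  · rw [one_div_one_div]; ring
/-- Any bi-infinite sequence with digits in `{1,2,3,4}` whose Markov value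
`m(a) = ⨆ n, λₙ(a)` is strictly less than `4.528` contains no subword `334` nor its
transpose `433`. -/
theorem stmt_18 (a : ℤ → ℕ) (hdig : ∀ i, 1 ≤ a i ∧ a i ≤ 4)
    (lam : ℤ → ℝ) (hlam : IsLambda a lam)
    (hM : (⨆ n : ℤ, lam n) < 4.528) :
    ∀ n : ℤ, ¬(a n = 3 ∧ a (n + 1) = 3 ∧ a (n + 2) = 4) ∧
      ¬(a n = 4 ∧ a (n + 1) = 3 ∧ a (n + 2) = 3) := by
  have hd1 : ∀ i, (1:ℝ) ≤ (a i : ℝ) := fun i => by exact_mod_cast (hdig i).1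
  have hd4 : ∀ i, (a i : ℝ) ≤ 4 := fun i => by exact_mod_cast (hdig i).2
  have expand : ∀ m : ℤ, ∃ y1 y2 w1 w2 : ℝ,
      lam m = ((a m : ℝ) + 1/y1) + 1/w1 ∧
      y1 = (a (m-1) : ℝ) + 1/y2 ∧
      w1 = (a (m+1) : ℝ) + 1/w2 ∧
      (a (m-2) : ℝ) ≤ y2 ∧ (a (m+2) : ℝ) ≤ w2 ∧
      1 ≤ y1 ∧ 1 ≤ y2 ∧ 1 ≤ w1 ∧ 1 ≤ w2 := by
    intro m
    obtain ⟨L, R, hL, hR, hsum⟩ := hlam m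
    set bL : ℕ → ℝ := fun k => (a (m - (k : ℤ)) : ℝ) with hbL
    have hbLd : ∀ k, 1 ≤ bL (k+1) := fun k => hd1 _
    obtain ⟨y1, hy1v, hy1l, hy1u, hy1e⟩ := cf_step_s18 bL hbLd hL
    have hSbLd : ∀ k, 1 ≤ cfS bL (k+1) := fun k => hd1 _
    obtain ⟨y2, hy2v, hy2l, hy2u, hy2e⟩ := cf_step_s18 (cfS bL) hSbLd hy1v
    set c : ℕ → ℝ := fun k => if k = 0 then 0 else (a (m + (k : ℤ)) : ℝ) with hc
    have hcd : ∀ k, 1 ≤ c (k+1) := fun k => by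
      simp only [hc, Nat.succ_ne_zero, if_false]
      exact hd1 _
    obtain ⟨w1, hw1v, hw1l, hw1u, hw1e⟩ := cf_step_s18 c hcd hR
    have hScd : ∀ k, 1 ≤ cfS c (k+1) := fun k => by
      simp only [cfS, hc, Nat.succ_ne_zero, if_false]
      exact hd1 _
    obtain ⟨w2, hw2v, hw2l, hw2u, hw2e⟩ := cf_step_s18 (cfS c) hScd hw1v
    have eb0 : bL 0 = (a m : ℝ) := by norm_num [hbL]
    have eb1 : bL 1 = (a (m-1) : ℝ) := by norm_num [hbL]
    have eb2 : cfS bL 1 = (a (m-2) : ℝ) := by norm_num [cfS, hbL]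
    have eSb0 : cfS bL 0 = bL 1 := rfl
    have ec0 : c 0 = 0 := by norm_num [hc]
    have ec1 : c 1 = (a (m+1) : ℝ) := by norm_num [hc]
    have ec2 : cfS c 1 = (a (m+2) : ℝ) := by norm_num [cfS, hc]
    have eSc0 : cfS c 0 = c 1 := rfl
    have hy1ge : (1:ℝ) ≤ y1 := le_trans (by rw [eb1]; exact hd1 _) hy1l
    have hy2ge : (1:ℝ) ≤ y2 := le_trans (by rw [eb2]; exact hd1 _) hy2l
    have hw1ge : (1:ℝ) ≤ w1 := le_trans (by rw [ec1]; exact hd1 _) hw1l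
    have hw2ge : (1:ℝ) ≤ w2 := le_trans (by rw [ec2]; exact hd1 _) hw2l
    refine ⟨y1, y2, w1, w2, ?_, ?_, ?_, ?_, ?_, hy1ge, hy2ge, hw1ge, hw2ge⟩
    · rw [hsum, hy1e, hw1e, eb0, ec0]; ring
    · rw [hy2e, eSb0, eb1]
    · rw [hw2e, eSc0, ec1]
    · rw [← eb2]; exact hy2l
    · rw [← ec2]; exact hw2l
  have hbdd : BddAbove (Set.range lam) := by
    refine ⟨6, ?_⟩
    rintro _ ⟨m, rfl⟩
    obtain ⟨y1, y2, w1, w2, h0, _, _, _, _, hy1, _, hw1, _⟩ := expand m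
    have i1 : 1/y1 ≤ 1 := by rw [div_le_one (by linarith)]; linarith
    have i2 : 1/w1 ≤ 1 := by rw [div_le_one (by linarith)]; linarith
    have := hd4 m
    rw [h0]; linarith
  have hub : ∀ k : ℤ, lam k < 4.528 := fun k => lt_of_le_of_lt (le_ciSup hbdd k) hM
  have hA : ∀ m : ℤ, a m = 4 → 3 ≤ a (m+1) := by
    intro m h4
    by_contra hlt
    push_neg at hlt
    obtain ⟨y1, y2, w1, w2, h0, hy, hw, hy2, hw2, hy1o, hy2o, hw1o, hw2o⟩ := expand m
    have ham : (a m : ℝ) = 4 := by rw [h4]; norm_num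
    have ham1 : (a (m+1) : ℝ) ≤ 2 := by
      have : a (m+1) ≤ 2 := by omega
      exact_mod_cast this
    have iy2 : 1/y2 ≤ 1 := by rw [div_le_one (by linarith)]; linarith
    have iw2 : 1/w2 ≤ 1 := by rw [div_le_one (by linarith)]; linarith
    have hy1le : y1 ≤ 5 := by have := hd4 (m-1); linarith [hy]
    have hw1le : w1 ≤ 3 := by linarith [hw]
    have i1 : (1:ℝ)/5 ≤ 1/y1 := by
      rw [div_le_div_iff₀ (by norm_num) (by linarith)]; linarith
    have i2 : (1:ℝ)/3 ≤ 1/w1 := by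
      rw [div_le_div_iff₀ (by norm_num) (by linarith)]; linarith
    have hlt' := hub m
    rw [h0, ham] at hlt'
    linarith
  have hA' : ∀ m : ℤ, a m = 4 → 3 ≤ a (m-1) := by
    intro m h4
    by_contra hlt
    push_neg at hlt
    obtain ⟨y1, y2, w1, w2, h0, hy, hw, hy2, hw2, hy1o, hy2o, hw1o, hw2o⟩ := expand m
    have ham : (a m : ℝ) = 4 := by rw [h4]; norm_num
    have ham1 : (a (m-1) : ℝ) ≤ 2 := by
      have : a (m-1) ≤ 2 := by omega
      exact_mod_cast this
    have iy2 : 1/y2 ≤ 1 := by rw [div_le_one (by linarith)]; linarith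
    have iw2 : 1/w2 ≤ 1 := by rw [div_le_one (by linarith)]; linarith
    have hy1le : y1 ≤ 3 := by linarith [hy]
    have hw1le : w1 ≤ 5 := by have := hd4 (m+1); linarith [hw]
    have i1 : (1:ℝ)/3 ≤ 1/y1 := by
      rw [div_le_div_iff₀ (by norm_num) (by linarith)]; linarith
    have i2 : (1:ℝ)/5 ≤ 1/w1 := by
      rw [div_le_div_iff₀ (by norm_num) (by linarith)]; linarith
    have hlt' := hub m
    rw [h0, ham] at hlt'
    linarith
  intro n
  constructor
  · rintro ⟨h3a, h3b, h4⟩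
    obtain ⟨y1, y2, w1, w2, h0, hy, hw, hy2, hw2, hy1o, hy2o, hw1o, hw2o⟩ := expand (n+2)
    have e1 : n + 2 - 1 = n + 1 := by ring
    have e2 : n + 2 - 2 = n := by ring
    have e3 : n + 2 + 1 = n + 3 := by ring
    have e4 : n + 2 + 2 = n + 4 := by ring
    rw [e1] at hy; rw [e2] at hy2; rw [e3] at hw; rw [e4] at hw2
    have c0 : (a (n+2) : ℝ) = 4 := by rw [h4]; norm_num
    have c1 : (a (n+1) : ℝ) = 3 := by rw [h3b]; norm_num
    have c2 : (3:ℝ) ≤ (a n : ℝ) := by rw [h3a]; norm_num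
    have hy2ge : (3:ℝ) ≤ y2 := le_trans c2 hy2
    have iy2 : 1/y2 ≤ 1/3 := by
      rw [div_le_div_iff₀ (by linarith) (by norm_num)]; linarith
    have hy1le : y1 ≤ 10/3 := by rw [hy, c1]; linarith
    have i1 : (3:ℝ)/10 ≤ 1/y1 := by
      rw [div_le_div_iff₀ (by norm_num) (by linarith)]; linarith
    have ha3 : 3 ≤ a (n+3) := by
      have := hA (n+2) h4
      rwa [show n+2+1 = n+3 from by ring] at this
    have hlt' := hub (n+2)
    rw [h0, c0] at hlt'
    have h34 : a (n+3) = 3 ∨ a (n+3) = 4 := by have := (hdig (n+3)).2; omega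
    rcases h34 with h | h
    · have ch : (a (n+3) : ℝ) = 3 := by rw [h]; norm_num
      have iw2 : 1/w2 ≤ 1 := by rw [div_le_one (by linarith)]; linarith
      have hw1le : w1 ≤ 4 := by rw [hw, ch]; linarith
      have i2 : (1:ℝ)/4 ≤ 1/w1 := by
        rw [div_le_div_iff₀ (by norm_num) (by linarith)]; linarith
      linarith
    · have ch : (a (n+3) : ℝ) = 4 := by rw [h]; norm_num
      have ha4 : 3 ≤ a (n+3+1) := hA (n+3) h
      have e5 : n + 3 + 1 = n + 4 := by ring
      rw [e5] at ha4
      have hw2ge : (3:ℝ) ≤ w2 := le_trans (by exact_mod_cast ha4) hw2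
      have iw2 : 1/w2 ≤ 1/3 := by
        rw [div_le_div_iff₀ (by linarith) (by norm_num)]; linarith
      have hw1le : w1 ≤ 13/3 := by rw [hw, ch]; linarith
      have i2 : (3:ℝ)/13 ≤ 1/w1 := by
        rw [div_le_div_iff₀ (by norm_num) (by linarith)]; linarith
      linarith
  · rintro ⟨h4, h3a, h3b⟩
    obtain ⟨y1, y2, w1, w2, h0, hy, hw, hy2, hw2, hy1o, hy2o, hw1o, hw2o⟩ := expand n
    have c0 : (a n : ℝ) = 4 := by rw [h4]; norm_num
    have c1 : (a (n+1) : ℝ) = 3 := by rw [h3a]; norm_num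
    have c2 : (3:ℝ) ≤ (a (n+2) : ℝ) := by rw [h3b]; norm_num
    have hw2ge : (3:ℝ) ≤ w2 := le_trans c2 hw2
    have iw2 : 1/w2 ≤ 1/3 := by
      rw [div_le_div_iff₀ (by linarith) (by norm_num)]; linarith
    have hw1le : w1 ≤ 10/3 := by rw [hw, c1]; linarith
    have i2 : (3:ℝ)/10 ≤ 1/w1 := by
      rw [div_le_div_iff₀ (by norm_num) (by linarith)]; linarith
    have ha3 : 3 ≤ a (n-1) := hA' n h4
    have hlt' := hub n
    rw [h0, c0] at hlt'
    have h34 : a (n-1) = 3 ∨ a (n-1) = 4 := by have := (hdig (n-1)).2; omega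
    rcases h34 with h | h
    · have ch : (a (n-1) : ℝ) = 3 := by rw [h]; norm_num
      have iy2 : 1/y2 ≤ 1 := by rw [div_le_one (by linarith)]; linarith
      have hy1le : y1 ≤ 4 := by rw [hy, ch]; linarith
      have i1 : (1:ℝ)/4 ≤ 1/y1 := by
        rw [div_le_div_iff₀ (by norm_num) (by linarith)]; linarith
      linarith
    · have ch : (a (n-1) : ℝ) = 4 := by rw [h]; norm_num
      have ha4 : 3 ≤ a (n-1-1) := hA' (n-1) h
      have e5 : n - 1 - 1 = n - 2 := by ring
      rw [e5] at ha4
      have hy2ge : (3:ℝ) ≤ y2 := le_trans (by exact_mod_cast ha4) hy2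
      have iy2 : 1/y2 ≤ 1/3 := by
        rw [div_le_div_iff₀ (by linarith) (by norm_num)]; linarith
      have hy1le : y1 ≤ 13/3 := by rw [hy, ch]; linarith
      have i1 : (3:ℝ)/13 ≤ 1/y1 := by
        rw [div_le_div_iff₀ (by norm_num) (by linarith)]; linarith
      linarith
end

section
/- Let a' < a'' and b' < b'' be reals, and let U = (a', a''), V = (b', b'') be open intervals. Let A, B ⊆ ℝ with A ∩ U = ∅ and B ∩ V = ∅, min A = a, min B = b, A ⊆ [a, ∞), B ⊆ [b, ∞), and suppose a'' − a' > b' − b and b'' − b' > a' − a. Then the interval (max(a' + b', a + b), min(a + b'', a'' + b)) is nonempty and disjoint from A + B. -/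
open scoped Pointwise

/-- If `U = (a',a'')` is a gap of `A`, `V = (b',b'')` is a gap of `B`, `a = min A ≤ a'`,
`b = min B ≤ b'`, `a''−a' > b'−b` and `b''−b' > a'−a`, then the interval
`(max(a'+b', a+b), min(a+b'', a''+b))` is nonempty and disjoint from `A + B`. -/
theorem stmt_19 (A B : Set ℝ) (a a' a'' b b' b'' : ℝ)
    (ha : a' < a'') (hb : b' < b'')
    (hAU : A ∩ Set.Ioo a' a'' = ∅) (hBV : B ∩ Set.Ioo b' b'' = ∅)
    (hminA : IsLeast A a) (hminB : IsLeast B b)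
    (ha' : a ≤ a') (hb' : b ≤ b')
    (h1 : a'' - a' > b' - b) (h2 : b'' - b' > a' - a) :
    max (a' + b') (a + b) < min (a + b'') (a'' + b) ∧
      Set.Ioo (max (a' + b') (a + b)) (min (a + b'') (a'' + b)) ∩ (A + B) = ∅ := by
  constructor
  · simp only [max_lt_iff, lt_min_iff]
    refine ⟨⟨by linarith, by linarith⟩, by linarith, by linarith⟩
  · ext z
    simp only [Set.mem_inter_iff, Set.mem_empty_iff_false, iff_false, not_and, Set.mem_Ioo]
    rintro ⟨hz1, hz2⟩ hz
    obtain ⟨x, hx, y, hy, rfl⟩ := hz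
    have hxa : a ≤ x := hminA.2 hx
    have hyb : b ≤ y := hminB.2 hy
    have hxg : x ≤ a' ∨ a'' ≤ x := by
      by_contra h
      push_neg at h
      exact absurd hAU (by
        apply Set.Nonempty.ne_empty
        exact ⟨x, hx, h.1, h.2⟩)
    have hyg : y ≤ b' ∨ b'' ≤ y := by
      by_contra h
      push_neg at h
      exact absurd hBV (by
        apply Set.Nonempty.ne_empty
        exact ⟨y, hy, h.1, h.2⟩)
    have hm1 : max (a' + b') (a + b) < x + y := hz1
    have hm2 : x + y < min (a + b'') (a'' + b) := hz2
    rw [max_lt_iff] at hm1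
    rw [lt_min_iff] at hm2
    rcases hxg with hx' | hx'
    · rcases hyg with hy' | hy'
      · linarith [hm1.1]
      · linarith [hm2.1]
    · linarith [hm2.2]
end
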